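/- Let A be a commutative ring and f, g ∈ A nonzerodivisors with f dividing g. Suppose that for every valuation ring V and every ring homomorphism φ : A → V with φ(f) ≠ 0 and φ(g) ≠ 0, the principal ideals of V generated by φ(f) and by φ(g) coincide. Then the principal ideals (f) and (g) of A coincide. -/

import Mathlib

set_option maxHeartbeats 1000000
set_option synthInstance.maxHeartbeats 400000


universe u

lemma not_mem_of_minimalPrime_aux {A : Type*} [CommRing A] {p : Ideal A}
    (hp : p ∈ minimalPrimes A) {x : A} (hx : x ∈ nonZeroDivisors A) : x ∉ p := by
  intro hxp
  haveI hprime : p.IsPrime := hp.1.1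
  have hnil : IsNilpotent (algebraMap A (Localization p.primeCompl) x) := by
    haveI := Ring.KrullDimLE.of_isLocalization p hp (Localization p.primeCompl)
    rw [Ring.KrullDimLE.isNilpotent_iff_mem_maximalIdeal]
    exact (IsLocalization.AtPrime.to_map_mem_maximal_iff _ p x).mpr hxp
  obtain ⟨n, hn⟩ := hnil
  rw [← map_pow, IsLocalization.map_eq_zero_iff p.primeCompl] at hn
  obtain ⟨s, hs⟩ := hn
  have : (s : A) = 0 := (mul_right_mem_nonZeroDivisors_eq_zero_iff (pow_mem hx n)).mp hs
  exact s.2 (this ▸ p.zero_mem)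

/-- Let `f, g` be nonzerodivisors of a commutative ring `A` with `f ∣ g`.  If for every
valuation ring `V` and every ring homomorphism `φ : A → V` with `φ f ≠ 0` and `φ g ≠ 0`
the principal ideals `(φ f)` and `(φ g)` of `V` coincide, then `(f) = (g)` in `A`. -/
theorem span_singleton_eq_of_forall_valuationRing
    {A : Type u} [CommRing A] (f g : A)
    (hf : f ∈ nonZeroDivisors A) (hg : g ∈ nonZeroDivisors A)
    (hfg : f ∣ g)
    (h : ∀ (V : Type u) [CommRing V] [IsDomain V] [ValuationRing V]
      (φ : A →+* V), φ f ≠ 0 → φ g ≠ 0 →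
        Ideal.span {φ f} = Ideal.span {φ g}) :
    Ideal.span {f} = Ideal.span {g} := by
  obtain ⟨c, rfl⟩ := hfg
  refine le_antisymm ?_ (Ideal.span_singleton_le_span_singleton.mpr ⟨c, rfl⟩)
  rw [Ideal.span_singleton_le_span_singleton]
  -- It suffices that `c` is a unit.
  suffices hc : IsUnit c by
    obtain ⟨u, rfl⟩ := hc
    exact ⟨(u⁻¹ : Aˣ), by simp [mul_assoc]⟩
  by_contra hc
  obtain ⟨m, hm, hcm⟩ := Ideal.exists_le_maximal (Ideal.span {c})
    (by simpa [Ideal.span_singleton_eq_top] using hc)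
  have hcm : c ∈ m := hcm (Ideal.subset_span rfl)
  obtain ⟨p, hp, hpm⟩ := Ideal.exists_minimalPrimes_le (bot_le : (⊥ : Ideal A) ≤ m)
  have hpmin : p ∈ minimalPrimes A := hp
  haveI hprime : p.IsPrime := hpmin.1.1
  have hfp : f ∉ p := not_mem_of_minimalPrime_aux hpmin hf
  have hgp : f * c ∉ p := not_mem_of_minimalPrime_aux hpmin hg
  -- pass to the domain `D = A ⧸ p` and its fraction field `K`
  set D := A ⧸ p with hD
  set K := FractionRing D with hK
  set ψ' : D →+* K := algebraMap D K with hψ'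
  have hψ'inj : Function.Injective ψ' := IsFractionRing.injective D K
  set ψ : A →+* K := ψ'.comp (Ideal.Quotient.mk p) with hψ
  set S : Subring K := ψ'.range with hS
  -- the image of `m` in `S`
  set mD : Ideal D := m.map (Ideal.Quotient.mk p) with hmD
  haveI : mD.IsPrime := by
    refine Ideal.map_isPrime_of_surjective Ideal.Quotient.mk_surjective ?_
    rw [Ideal.mk_ker]; exact hpm
  set M : Ideal S := mD.map ψ'.rangeRestrict with hM
  haveI : M.IsPrime := by
    refine Ideal.map_isPrime_of_surjective ψ'.rangeRestrict_surjective ?_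
    rw [RingHom.ker_rangeRestrict, (RingHom.injective_iff_ker_eq_bot ψ').mp hψ'inj]
    exact bot_le
  obtain ⟨B, hB⟩ := (LocalSubring.ofPrime S M).exists_le_valuationSubring
  have hmem : ∀ a : A, ψ a ∈ B.toSubring :=
    fun a ↦ hB.1 (LocalSubring.le_ofPrime S M ⟨Ideal.Quotient.mk p a, rfl⟩)
  set φ : A →+* B := ψ.codRestrict B.toSubring hmem with hφ
  have hinjK : ∀ a : A, a ∉ p → φ a ≠ 0 := by
    intro a hap e
    have : ψ a = 0 := congrArg Subtype.val e
    rw [hψ, RingHom.comp_apply, ← map_zero ψ'] at this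
    exact hap (Ideal.Quotient.eq_zero_iff_mem.mp (hψ'inj this))
  have hspan := h B φ (hinjK f hfp) (hinjK (f * c) hgp)
  -- from the span equality, `φ c` is a unit in `B`
  have hdvd : (φ (f * c)) ∣ φ f := Ideal.span_singleton_le_span_singleton.mp hspan.le
  obtain ⟨v, hv⟩ := hdvd
  have hφc : IsUnit (φ c) := by
    refine IsUnit.of_mul_eq_one v ?_
    have h1 : φ f * (φ c * v) = φ f * 1 := by
      rw [mul_one, ← mul_assoc, ← map_mul]; exact hv.symm
    exact mul_left_cancel₀ (hinjK f hfp) h1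
  -- but `φ c` lies in the maximal ideal of the dominating local subring, contradiction
  have hr : IsUnit (Subring.inclusion (LocalSubring.le_ofPrime S M)
      (⟨ψ c, ⟨Ideal.Quotient.mk p c, rfl⟩⟩ : S)) := by
    haveI := hB.2
    apply isUnit_of_map_unit (Subring.inclusion hB.1)
    have heq : Subring.inclusion hB.1 (Subring.inclusion (LocalSubring.le_ofPrime S M)
        (⟨ψ c, ⟨Ideal.Quotient.mk p c, rfl⟩⟩ : S)) = φ c := Subtype.ext rfl
    rw [heq]; exact hφc
  have : IsUnit ((algebraMap S (LocalSubring.ofPrime S M).toSubring)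
      (⟨ψ c, ⟨Ideal.Quotient.mk p c, rfl⟩⟩ : S)) := hr
  rw [IsLocalization.AtPrime.isUnit_to_map_iff _ M] at this
  refine this ?_
  have : (⟨ψ c, ⟨Ideal.Quotient.mk p c, rfl⟩⟩ : S) = ψ'.rangeRestrict (Ideal.Quotient.mk p c) :=
    rfl
  rw [this]
  exact Ideal.mem_map_of_mem _ (Ideal.mem_map_of_mem _ hcm)
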